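/- There are infinitely many integers n ≥ 4 such that ∏_{k=4}^{n} ((k(k−3))² − 2) is a perfect square. -/

import Mathlib

private lemma prod_formula (n : ℤ) (hn : 4 ≤ n) :
    (∏ k ∈ Finset.Icc 4 n, ((k * (k - 3))^2 - 2)) =
    (∏ j ∈ Finset.Icc 3 (n-2), (j^2 - 2))^2 * (2 * ((n-1)^2 - 2)) := by
  refine Int.le_induction (motive := fun n _ => (∏ k ∈ Finset.Icc 4 n, ((k * (k - 3))^2 - 2)) =
      (∏ j ∈ Finset.Icc 3 (n-2), (j^2 - 2))^2 * (2 * ((n-1)^2 - 2))) ?_ ?_ n hn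
  · decide
  · intro n hn ih
    have h1 : Finset.Icc (4:ℤ) (n+1) = insert (n+1) (Finset.Icc 4 n) := by
      ext x; simp [Finset.mem_Icc]; omega
    have h2 : Finset.Icc (3:ℤ) (n+1-2) = insert (n-1) (Finset.Icc 3 (n-2)) := by
      ext x; simp [Finset.mem_Icc]; omega
    have h3 : (n+1 : ℤ) ∉ Finset.Icc (4:ℤ) n := by simp [Finset.mem_Icc]
    have h4 : (n-1 : ℤ) ∉ Finset.Icc (3:ℤ) (n-2) := by simp [Finset.mem_Icc]; omega
    rw [h1, Finset.prod_insert h3, ih, h2, Finset.prod_insert h4]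
    ring

private def pell : ℕ → ℤ × ℤ
  | 0 => (10, 7)
  | (i+1) => (3 * (pell i).1 + 4 * (pell i).2, 2 * (pell i).1 + 3 * (pell i).2)

private lemma pell_props (i : ℕ) :
    (pell i).1 ^ 2 - 2 * (pell i).2 ^ 2 = 2 ∧ 10 ≤ (pell i).1 ∧ 7 ≤ (pell i).2 := by
  induction i with
  | zero => decide
  | succ i ih =>
    obtain ⟨h1, h2, h3⟩ := ih
    refine ⟨?_, ?_, ?_⟩
    · simp only [pell]; nlinarith
    · simp only [pell]; nlinarith
    · simp only [pell]; nlinarith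

private lemma pell_mono : StrictMono (fun i => (pell i).1) := by
  apply strictMono_nat_of_lt_succ
  intro i
  obtain ⟨_, h2, h3⟩ := pell_props i
  show (pell i).1 < 3 * (pell i).1 + 4 * (pell i).2
  nlinarith

theorem stmt11 :
    {n : ℤ | 4 ≤ n ∧ ∃ y : ℤ, (∏ k ∈ Finset.Icc 4 n, ((k * (k - 3))^2 - 2)) = y^2}.Infinite := by
  have hinj : Function.Injective (fun i : ℕ => (pell i).1 + 1) := by
    intro a b hab
    exact pell_mono.injective (by simpa using hab)
  apply Set.infinite_of_injective_forall_mem hinj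
  intro i
  obtain ⟨h1, h2, h3⟩ := pell_props i
  set n : ℤ := (pell i).1 + 1 with hn
  refine ⟨by omega, (∏ j ∈ Finset.Icc 3 (n-2), (j^2 - 2)) * (2 * (pell i).2), ?_⟩
  rw [prod_formula n (by omega)]
  have : (n - 1)^2 - 2 = 2 * (pell i).2 ^ 2 := by rw [hn]; ring_nf; nlinarith
  rw [this]; ring
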